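/- arXiv:2103.16811 — 2 statements merged into one kernel-verified Lean document; each statement's English description precedes it below -/
import Mathlib

section
/- Let f : F_2^n → {0,1} be a Boolean function of granularity k (every Fourier coefficient has the form m/2^k with m an integer, and some coefficient has odd numerator m at denominator 2^k) with f̂(0) = m/2^k for a positive integer m. Then there exists an affine subspace S ⊆ F_2^n of codimension at most k+m−1 on which f is constant. -/
open Finset

/-- The Fourier coefficient `f̂(α) = E_x[f(x)·(-1)^⟨α,x⟩]` of `f : F_2^n → ℝ`. -/
noncomputable def fc {n : ℕ} (f : (Fin n → ZMod 2) → ℝ) (α : Fin n → ZMod 2) : ℝ :=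
  (∑ x : Fin n → ZMod 2, f x * (-1 : ℝ) ^ (∑ i, α i * x i : ZMod 2).val) / 2 ^ n

noncomputable def ch (a : ZMod 2) : ℝ := (-1 : ℝ) ^ a.val

lemma ch_zero : ch 0 = 1 := rfl
lemma ch_one : ch 1 = -1 := by
  have : (1 : ZMod 2).val = 1 := rfl
  simp [ch, this]

lemma ch_add (a b : ZMod 2) : ch (a + b) = ch a * ch b := by
  have h : (a + b).val % 2 = (a.val + b.val) % 2 := by revert a b; decide
  unfold ch
  rw [neg_one_pow_eq_pow_mod_two, h, ← neg_one_pow_eq_pow_mod_two, pow_add]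

lemma ch_mul_self (a : ZMod 2) : ch a * ch a = 1 := by
  rw [← ch_add]
  have : a + a = 0 := by revert a; decide
  rw [this, ch_zero]

lemma ch_sum {ι : Type*} (s : Finset ι) (g : ι → ZMod 2) :
    ch (∑ j ∈ s, g j) = ∏ j ∈ s, ch (g j) := by
  induction s using Finset.cons_induction with
  | empty => simp [ch_zero]
  | cons a s ha ih => simp [ch_add, ih]

def ip {n : ℕ} (β x : Fin n → ZMod 2) : ZMod 2 := ∑ j, β j * x j

lemma ip_add_left {n : ℕ} (β γ x : Fin n → ZMod 2) : ip (β + γ) x = ip β x + ip γ x := by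
  simp [ip, add_mul, Finset.sum_add_distrib]

lemma ip_add_right {n : ℕ} (β x y : Fin n → ZMod 2) : ip β (x + y) = ip β x + ip β y := by
  simp [ip, mul_add, Finset.sum_add_distrib]

lemma ip_single {n : ℕ} (β : Fin n → ZMod 2) (i : Fin n) :
    ip β (Pi.single i 1) = β i := by
  simp [ip, Pi.single_apply, mul_ite]

lemma ip_smul_right {n : ℕ} (β x : Fin n → ZMod 2) (t : ZMod 2) :
    ip β (t • x) = t * ip β x := by
  simp [ip, Finset.mul_sum]; congr 1; funext j; ring

lemma sum_zmod2 (F : ZMod 2 → ℝ) : ∑ b : ZMod 2, F b = F 0 + F 1 := by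
  have : (univ : Finset (ZMod 2)) = {0, 1} := by decide
  rw [this]
  simp

lemma orth {n : ℕ} (z : Fin n → ZMod 2) :
    ∑ β : Fin n → ZMod 2, ch (ip β z) = if z = 0 then 2 ^ n else 0 := by
  have h1 : ∑ β : Fin n → ZMod 2, ch (ip β z) = ∏ j : Fin n, (1 + ch (z j)) := by
    have := Finset.prod_univ_sum (fun _ : Fin n => (univ : Finset (ZMod 2)))
      (fun j b => ch (b * z j))
    rw [Fintype.piFinset_univ] at this
    calc ∑ β : Fin n → ZMod 2, ch (ip β z)
        = ∑ β : Fin n → ZMod 2, ∏ j : Fin n, ch (β j * z j) := by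
          apply Finset.sum_congr rfl; intro β _; exact ch_sum univ _
      _ = ∏ j : Fin n, ∑ b : ZMod 2, ch (b * z j) := this.symm
      _ = ∏ j : Fin n, (1 + ch (z j)) := by
          apply Finset.prod_congr rfl; intro j _
          rw [sum_zmod2]; simp [ch_zero]
  rw [h1]
  by_cases hz : z = 0
  · simp [hz, ch_zero]
    norm_num
  · obtain ⟨j, hj⟩ : ∃ j, z j ≠ 0 := by
      by_contra h; push_neg at h; exact hz (funext h)
    have hj1 : z j = 1 := by revert hj; generalize z j = a; revert a; decide
    rw [if_neg hz]
    exact Finset.prod_eq_zero (mem_univ j) (by rw [hj1, ch_one]; ring)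

lemma zmod2_add_self (a : ZMod 2) : a + a = 0 := by revert a; decide

lemma pi_add_self {n : ℕ} (y : Fin n → ZMod 2) : y + y = 0 := by
  funext j; exact zmod2_add_self (y j)

lemma fc_eq {n : ℕ} (f : (Fin n → ZMod 2) → ℝ) (β : Fin n → ZMod 2) :
    fc f β = (∑ x, f x * ch (ip β x)) / 2 ^ n := rfl

lemma fc_inv {n : ℕ} (f : (Fin n → ZMod 2) → ℝ) (hc : ∀ β, β ≠ 0 → fc f β = 0)
    (x : Fin n → ZMod 2) : f x = fc f 0 := by
  have key : ∑ β : Fin n → ZMod 2, fc f β * ch (ip β x) = f x := by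
    calc ∑ β : Fin n → ZMod 2, fc f β * ch (ip β x)
        = (∑ β : Fin n → ZMod 2, ∑ y, f y * ch (ip β y) * ch (ip β x)) / 2 ^ n := by
          rw [Finset.sum_div]; apply Finset.sum_congr rfl; intro β _
          rw [fc_eq, div_mul_eq_mul_div, Finset.sum_mul]
      _ = (∑ y, f y * ∑ β : Fin n → ZMod 2, ch (ip β (y + x))) / 2 ^ n := by
          rw [Finset.sum_comm]; congr 1; apply Finset.sum_congr rfl; intro y _
          rw [Finset.mul_sum]; apply Finset.sum_congr rfl; intro β _
          rw [ip_add_right, ch_add]; ring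
      _ = (f x * 2 ^ n) / 2 ^ n := by
          congr 1
          rw [Finset.sum_eq_single x]
          · rw [orth, if_pos (pi_add_self x)]
          · intro y _ hy
            rw [orth, if_neg, mul_zero]
            intro h
            apply hy
            have h2 : y + x + x = 0 + x := by rw [h]
            rwa [add_assoc, pi_add_self, add_zero, zero_add] at h2
          · intro h; exact absurd (mem_univ x) h
      _ = f x := by
          rw [mul_div_assoc, div_self (by positivity), mul_one]
  rw [← key, Finset.sum_eq_single 0]
  · have : ip 0 x = 0 := by simp [ip]
    rw [this, ch_zero, mul_one]
  · intro β _ hβ; rw [hc β hβ, zero_mul]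
  · intro h; exact absurd (mem_univ 0) h


section
variable {n : ℕ}

/-- Linear part of the projection onto the hyperplane `ip α x = c` along `e i`. -/
def Lmap (α : Fin n → ZMod 2) (i : Fin n) : (Fin n → ZMod 2) →ₗ[ZMod 2] (Fin n → ZMod 2) where
  toFun x := x + (∑ j, α j * x j) • (Pi.single i 1 : Fin n → ZMod 2)
  map_add' x y := by
    simp only [Pi.add_apply, mul_add, Finset.sum_add_distrib, add_smul]
    abel
  map_smul' t x := by
    simp only [Pi.smul_apply, smul_eq_mul, RingHom.id_apply, smul_add, smul_smul]
    congr 2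
    · rw [Finset.mul_sum]; apply Finset.sum_congr rfl; intro j _; ring

/-- Projection onto the affine hyperplane `ip α x = c` along `e i`. -/
def pr (α : Fin n → ZMod 2) (i : Fin n) (c : ZMod 2) (x : Fin n → ZMod 2) : Fin n → ZMod 2 :=
  Lmap α i x + c • (Pi.single i 1 : Fin n → ZMod 2)

end

section
variable {n : ℕ} (α : Fin n → ZMod 2) (i : Fin n) (c : ZMod 2)

lemma pr_def (x : Fin n → ZMod 2) :
    pr α i c x = x + (ip α x + c) • (Pi.single i 1 : Fin n → ZMod 2) := by
  show x + (ip α x) • _ + c • _ = _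
  rw [add_smul, add_assoc]

lemma zmod2_ne (a b : ZMod 2) (h : a ≠ b) : a + b = 1 := by revert h; revert a b; decide

lemma pr_eq (x : Fin n → ZMod 2) :
    pr α i c x = if ip α x = c then x else x + Pi.single i 1 := by
  by_cases h : ip α x = c
  · have h0 : ip α x + c = 0 := by rw [h]; exact zmod2_add_self c
    rw [pr_def, h0, zero_smul, add_zero, if_pos h]
  · rw [pr_def, zmod2_ne _ _ h, one_smul, if_neg h]

lemma ip_pr (β x : Fin n → ZMod 2) :
    ip β (pr α i c x) = ip β x + (ip α x + c) * β i := by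
  rw [pr_def, ip_add_right, ip_smul_right, ip_single]

lemma pr_add_single (hαi : α i = 1) (x : Fin n → ZMod 2) :
    pr α i c (x + Pi.single i 1) = pr α i c x := by
  rw [pr_def, pr_def, ip_add_right, ip_single, hαi]
  have h1 : ip α x + 1 + c = (ip α x + c) + 1 := by ring
  rw [h1, add_smul, one_smul]
  have : x + Pi.single i 1 + ((ip α x + c) • (Pi.single i 1 : Fin n → ZMod 2) + Pi.single i 1)
      = x + (ip α x + c) • (Pi.single i 1 : Fin n → ZMod 2) + (Pi.single i 1 + Pi.single i 1) := by
    abel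
  rw [this, pi_add_self, add_zero]

lemma fc_pr_one (f : (Fin n → ZMod 2) → ℝ) (β : Fin n → ZMod 2)
    (hαi : α i = 1) (hβ : β i = 1) :
    fc (fun x => f (pr α i c x)) β = 0 := by
  rw [fc_eq]
  have hS : ∑ x, f (pr α i c x) * ch (ip β x)
      = -∑ x, f (pr α i c x) * ch (ip β x) := by
    conv_lhs => rw [← Equiv.sum_comp (Equiv.addRight (Pi.single i 1 : Fin n → ZMod 2))
      (fun x => f (pr α i c x) * ch (ip β x))]
    simp only [Equiv.coe_addRight]
    rw [← Finset.sum_neg_distrib]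
    apply Finset.sum_congr rfl
    intro x _
    rw [pr_add_single _ _ _ hαi, ip_add_right, ip_single, hβ, ch_add, ch_one]
    ring
  have : ∑ x, f (pr α i c x) * ch (ip β x) = 0 := by linarith
  rw [this, zero_div]

lemma zmod2_ne' (a b : ZMod 2) (h : a ≠ b) : a = b + 1 := by revert h; revert a b; decide
lemma zmod2_flip (a b : ZMod 2) : (a + 1 = b) ↔ ¬(a = b) := by revert a b; decide

lemma fc_pr_zero (f : (Fin n → ZMod 2) → ℝ) (β : Fin n → ZMod 2)
    (hαi : α i = 1) (hβ : β i = 0) :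
    fc (fun x => f (pr α i c x)) β = fc f β + ch c * fc f (β + α) := by
  set v : Fin n → ZMod 2 := Pi.single i 1 with hv
  set G : (Fin n → ZMod 2) → ℝ := fun y => f y * ch (ip β y) with hG
  have key : ∑ x, f (pr α i c x) * ch (ip β x)
      = ∑ x, f x * ch (ip β x) + ch c * ∑ x, f x * ch (ip (β + α) x) := by
    have step1 : ∑ x, f (pr α i c x) * ch (ip β x) = ∑ x, G (pr α i c x) := by
      apply Finset.sum_congr rfl; intro x _
      rw [hG]; simp only []
      rw [ip_pr, hβ, mul_zero, add_zero]
    have step2 : ∑ x, G (pr α i c x)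
        = ∑ x, ((if ip α x = c then G x else 0) + (if ip α x = c then 0 else G (x + v))) := by
      apply Finset.sum_congr rfl; intro x _
      rw [pr_eq]
      split <;> simp [hv]
    have step3 : ∑ x, (if ip α x = c then (0:ℝ) else G (x + v))
        = ∑ x, (if ip α x = c then G x else 0) := by
      conv_lhs => rw [← Equiv.sum_comp (Equiv.addRight v)
        (fun x => if ip α x = c then (0:ℝ) else G (x + v))]
      simp only [Equiv.coe_addRight]
      apply Finset.sum_congr rfl
      intro x _
      have h1 : ip α (x + v) = ip α x + 1 := by rw [ip_add_right, hv, ip_single, hαi]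
      have h2 : x + v + v = x := by rw [add_assoc, pi_add_self, add_zero]
      simp only [h1, h2]
      by_cases h : ip α x = c
      · rw [if_pos h, if_neg (by rw [zmod2_flip]; exact not_not_intro h)]
      · rw [if_neg h, if_pos (by rwa [zmod2_flip])]
    have step5 : ∀ x, G x + ch c * (G x * ch (ip α x))
        = (if ip α x = c then G x else 0) + (if ip α x = c then G x else 0) := by
      intro x
      by_cases h : ip α x = c
      · rw [if_pos h, h,
          show ch c * (G x * ch c) = G x * (ch c * ch c) from by ring, ch_mul_self, mul_one]
      · rw [if_neg h, zmod2_ne' _ _ h, ch_add, ch_one,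
          show ch c * (G x * (ch c * -1)) = -(G x * (ch c * ch c)) from by ring, ch_mul_self]
        ring
    calc ∑ x, f (pr α i c x) * ch (ip β x)
        = ∑ x, ((if ip α x = c then G x else 0) + (if ip α x = c then 0 else G (x + v))) := by
          rw [step1, step2]
      _ = ∑ x, (if ip α x = c then G x else 0) + ∑ x, (if ip α x = c then (0:ℝ) else G (x + v)) := by
          rw [Finset.sum_add_distrib]
      _ = ∑ x, ((if ip α x = c then G x else 0) + (if ip α x = c then G x else 0)) := by
          rw [step3, Finset.sum_add_distrib]
      _ = ∑ x, (G x + ch c * (G x * ch (ip α x))) := by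
          apply Finset.sum_congr rfl; intro x _; rw [step5]
      _ = ∑ x, f x * ch (ip β x) + ch c * ∑ x, f x * ch (ip (β + α) x) := by
          rw [Finset.sum_add_distrib, Finset.mul_sum]
          congr 1
          apply Finset.sum_congr rfl; intro x _
          rw [ip_add_left, ch_add, hG]
          ring
  rw [fc_eq, fc_eq, fc_eq, key, add_div, mul_div_assoc]

end
section
variable {n : ℕ} (α : Fin n → ZMod 2) (i : Fin n)

lemma ker_Lmap_le :
    LinearMap.ker (Lmap α i) ≤ Submodule.span (ZMod 2) {(Pi.single i 1 : Fin n → ZMod 2)} := by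
  intro x hx
  have hx' : x + (ip α x) • (Pi.single i 1 : Fin n → ZMod 2) = 0 := hx
  have hj : ∀ j, j ≠ i → x j = 0 := by
    intro j hj
    have := congrFun hx' j
    simpa [Pi.single_apply, hj] using this
  rw [Submodule.mem_span_singleton]
  refine ⟨x i, ?_⟩
  funext j
  by_cases h : j = i
  · subst h; simp
  · simp [Pi.single_apply, h, hj j h]

lemma finrank_le_map (V : Submodule (ZMod 2) (Fin n → ZMod 2)) :
    Module.finrank (ZMod 2) V ≤ Module.finrank (ZMod 2) (V.map (Lmap α i)) + 1 := by
  have h1 := LinearMap.finrank_range_add_finrank_ker ((Lmap α i).domRestrict V)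
  rw [LinearMap.range_domRestrict] at h1
  have h2 : Module.finrank (ZMod 2) (LinearMap.ker ((Lmap α i).domRestrict V)) ≤ 1 := by
    rw [LinearMap.ker_domRestrict]
    rw [← Submodule.finrank_map_subtype_eq V (Submodule.comap V.subtype (LinearMap.ker (Lmap α i)))]
    rw [Submodule.map_comap_subtype]
    have h3 : V ⊓ LinearMap.ker (Lmap α i) ≤
        Submodule.span (ZMod 2) {(Pi.single i 1 : Fin n → ZMod 2)} :=
      le_trans inf_le_right (ker_Lmap_le α i)
    have h4 : Module.finrank (ZMod 2) ↥(V ⊓ LinearMap.ker (Lmap α i)) ≤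
        Module.finrank (ZMod 2) ↥(Submodule.span (ZMod 2) {(Pi.single i 1 : Fin n → ZMod 2)}) :=
      Submodule.finrank_mono h3
    refine le_trans h4 ?_
    by_cases hs : (Pi.single i 1 : Fin n → ZMod 2) = 0
    · rw [hs, Submodule.span_zero_singleton]
      simp [finrank_bot]
    · rw [finrank_span_singleton hs]
  omega

end

lemma zmod2_cases (a : ZMod 2) : a = 0 ∨ a = 1 := by revert a; decide

lemma fc_zero_eq {n : ℕ} (f : (Fin n → ZMod 2) → ℝ) : fc f 0 = (∑ x, f x) / 2 ^ n := by
  rw [fc_eq]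
  congr 1
  apply Finset.sum_congr rfl
  intro x _
  have : ip (0 : Fin n → ZMod 2) x = 0 := by simp [ip]
  rw [this, ch_zero, mul_one]

lemma fc_zero_nonneg {n : ℕ} (f : (Fin n → ZMod 2) → ℝ) (hf : ∀ x, f x = 0 ∨ f x = 1) :
    0 ≤ fc f 0 := by
  rw [fc_zero_eq]
  apply div_nonneg _ (by positivity)
  apply Finset.sum_nonneg
  intro x _
  rcases hf x with h | h <;> rw [h] <;> norm_num

lemma main_lemma {n : ℕ} (k : ℕ) (m : ℕ) :
    ∀ f : (Fin n → ZMod 2) → ℝ,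
    (∀ x, f x = 0 ∨ f x = 1) → (∀ β, ∃ c : ℤ, fc f β = (c : ℝ) / 2 ^ k) →
    fc f 0 = (m : ℝ) / 2 ^ k →
    ∃ (a : Fin n → ZMod 2) (V : Submodule (ZMod 2) (Fin n → ZMod 2)) (c : ℝ),
      n - Module.finrank (ZMod 2) V ≤ m ∧
      ∀ x ∈ (a + ·) '' (V : Set (Fin n → ZMod 2)), f x = c := by
  induction m using Nat.strong_induction_on with
  | _ m IH =>
  intro f hf hg h0
  by_cases hconst : ∀ β, β ≠ 0 → fc f β = 0
  · refine ⟨0, ⊤, fc f 0, ?_, ?_⟩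
    · have : Module.finrank (ZMod 2) (⊤ : Submodule (ZMod 2) (Fin n → ZMod 2)) = n := by
        rw [finrank_top, Module.finrank_pi]; simp
      omega
    · rintro x -
      exact fc_inv f hconst x
  · push_neg at hconst
    obtain ⟨β₀, hβ₀ne, hβ₀⟩ := hconst
    obtain ⟨i, hi⟩ : ∃ i, β₀ i ≠ 0 := by
      by_contra h; push_neg at h; exact hβ₀ne (funext h)
    have hαi : β₀ i = 1 := by revert hi; generalize β₀ i = a; revert a; decide
    set c : ZMod 2 := if fc f β₀ < 0 then 0 else 1 with hc
    have hchc : ch c * fc f β₀ = -|fc f β₀| := by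
      rw [hc]; by_cases h : fc f β₀ < 0
      · rw [if_pos h, ch_zero, one_mul, abs_of_neg h]; ring
      · rw [if_neg h, ch_one, abs_of_nonneg (le_of_not_gt h)]; ring
    have hgb : ∀ x, (fun x => f (pr β₀ i c x)) x = 0 ∨ (fun x => f (pr β₀ i c x)) x = 1 :=
      fun x => hf _
    have hgg : ∀ β, ∃ c' : ℤ, fc (fun x => f (pr β₀ i c x)) β = (c' : ℝ) / 2 ^ k := by
      intro β
      rcases zmod2_cases (β i) with h | h
      · obtain ⟨c1, hc1⟩ := hg β
        obtain ⟨c2, hc2⟩ := hg (β + β₀)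
        obtain ⟨e, he⟩ : ∃ e : ℤ, ch c = (e : ℝ) := by
          rcases zmod2_cases c with h' | h'
          · exact ⟨1, by rw [h', ch_zero]; norm_num⟩
          · exact ⟨-1, by rw [h', ch_one]; push_cast; ring⟩
        refine ⟨c1 + e * c2, ?_⟩
        rw [fc_pr_zero β₀ i c f β hαi h, hc1, hc2, he]
        push_cast; ring
      · exact ⟨0, by rw [fc_pr_one β₀ i c f β hαi h]; simp⟩
    obtain ⟨c₀, hc₀⟩ := hg β₀
    have hc₀ne : c₀ ≠ 0 := by
      rintro rfl; apply hβ₀; rw [hc₀]; simp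
    have h2k : (0 : ℝ) < 2 ^ k := by positivity
    set t : ℕ := c₀.natAbs with htdef
    have ht1 : 1 ≤ t := Nat.one_le_iff_ne_zero.mpr (Int.natAbs_ne_zero.mpr hc₀ne)
    have hg0' : fc (fun x => f (pr β₀ i c x)) 0 = ((m : ℝ) - t) / 2 ^ k := by
      have hz : (0 : Fin n → ZMod 2) i = 0 := rfl
      rw [fc_pr_zero β₀ i c f 0 hαi hz, zero_add, h0]
      have habs : ch c * fc f β₀ = -((t : ℝ) / 2 ^ k) := by
        rw [hchc, hc₀, abs_div, abs_of_pos h2k, htdef]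
        congr 2
        rw [Nat.cast_natAbs]
        push_cast
        ring
      rw [habs]
      ring
    have hnonneg : 0 ≤ fc (fun x => f (pr β₀ i c x)) 0 := fc_zero_nonneg _ hgb
    have htm : t ≤ m := by
      rw [hg0'] at hnonneg
      have h3 : (0 : ℝ) ≤ (m : ℝ) - t := by
        by_contra h4
        push_neg at h4
        have : ((m : ℝ) - t) / 2 ^ k < 0 := div_neg_of_neg_of_pos h4 h2k
        linarith
      have : (t : ℝ) ≤ (m : ℝ) := by linarith
      exact_mod_cast this
    have hm' : m - t < m := by omega
    have hg0'' : fc (fun x => f (pr β₀ i c x)) 0 = ((m - t : ℕ) : ℝ) / 2 ^ k := by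
      rw [hg0']
      congr 1
      rw [Nat.cast_sub htm]
    obtain ⟨a, V, cst, hcodim, hconstant⟩ := IH (m - t) hm' _ hgb hgg hg0''
    refine ⟨pr β₀ i c a, V.map (Lmap β₀ i), cst, ?_, ?_⟩
    · have := finrank_le_map β₀ i V
      omega
    · rintro y ⟨w, hw, rfl⟩
      rw [Submodule.map_coe] at hw
      obtain ⟨v, hv, rfl⟩ := hw
      have heq : pr β₀ i c a + Lmap β₀ i v = pr β₀ i c (a + v) := by
        show Lmap β₀ i a + c • (Pi.single i 1 : Fin n → ZMod 2) + Lmap β₀ i v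
          = Lmap β₀ i (a + v) + c • (Pi.single i 1 : Fin n → ZMod 2)
        rw [map_add]; abel
      show f (pr β₀ i c a + Lmap β₀ i v) = cst
      rw [heq]
      exact hconstant (a + v) ⟨v, hv, rfl⟩

lemma sum_one_eq {n : ℕ} : ∑ _x : Fin n → ZMod 2, (1 : ℝ) = 2 ^ n := by
  rw [Finset.sum_const, Finset.card_univ]
  have : Fintype.card (Fin n → ZMod 2) = 2 ^ n := by
    rw [Fintype.card_fun]
    simp [ZMod]
  rw [this]
  simp


/-- Kill-number corollary: a Boolean function of granularity `k` with `f̂(0) = m/2^k`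
is constant on some affine subspace of codimension at most `k + m − 1`. -/
theorem stmt_16 {n k : ℕ} (f : (Fin n → ZMod 2) → ℝ)
    (hf : ∀ x, f x = 0 ∨ f x = 1)
    (hgran : ∀ α : Fin n → ZMod 2, ∃ c : ℤ, fc f α = (c : ℝ) / 2 ^ k)
    (hodd : ∃ (α : Fin n → ZMod 2) (c : ℤ), fc f α = (c : ℝ) / 2 ^ k ∧ Odd c)
    (m : ℕ) (hm : 0 < m) (h0 : fc f 0 = (m : ℝ) / 2 ^ k) :
    ∃ (a : Fin n → ZMod 2) (V : Submodule (ZMod 2) (Fin n → ZMod 2)) (c : ℝ),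
      n - Module.finrank (ZMod 2) V ≤ k + m - 1 ∧
      ∀ x ∈ (a + ·) '' (V : Set (Fin n → ZMod 2)), f x = c := by
  have htop : Module.finrank (ZMod 2) (⊤ : Submodule (ZMod 2) (Fin n → ZMod 2)) = n := by
    rw [finrank_top, Module.finrank_pi]; simp
  rcases Nat.eq_zero_or_pos k with hk | hk
  · subst hk
    have h2 : fc f 0 = (m : ℝ) := by rw [h0]; norm_num
    have hle : fc f 0 ≤ 1 := by
      rw [fc_zero_eq, div_le_one (by positivity)]
      calc ∑ x, f x ≤ ∑ _x : Fin n → ZMod 2, (1 : ℝ) := by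
            apply Finset.sum_le_sum
            intro x _
            rcases hf x with h | h <;> rw [h] <;> norm_num
        _ = 2 ^ n := sum_one_eq
    have hm1 : m = 1 := by
      have hmr : (m : ℝ) ≤ 1 := h2 ▸ hle
      have : m ≤ 1 := by exact_mod_cast hmr
      omega
    have hsum : ∑ x, f x = ∑ _x : Fin n → ZMod 2, (1 : ℝ) := by
      have h3 : (∑ x, f x) / 2 ^ n = 1 := by
        rw [← fc_zero_eq, h2, hm1]; norm_num
      rw [sum_one_eq]
      field_simp at h3
      linarith
    have hfx : ∀ x, f x = 1 := by
      intro x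
      by_contra hx
      rcases hf x with h | h
      · have hlt : ∑ x, f x < ∑ _x : Fin n → ZMod 2, (1 : ℝ) := by
          apply Finset.sum_lt_sum
          · intro y _
            rcases hf y with h' | h' <;> rw [h'] <;> norm_num
          · exact ⟨x, mem_univ x, by rw [h]; norm_num⟩
        linarith [hsum]
      · exact hx h
    exact ⟨0, ⊤, 1, by omega, fun x _ => hfx x⟩
  · obtain ⟨a, V, c, h1, h2⟩ := main_lemma k m f hf hgran h0
    exact ⟨a, V, c, by omega, h2⟩
end

section
/- Let f : F_2^n → {0,1} satisfy f̂(0) = 1/2^{k−1} and suppose there exists a non-zero α ∈ F_2^n with f̂(α) = 1/2^{k−1}. Then the restriction of f to the hyperplane {x : ⟨α,x⟩ = 1} is identically zero, and the restriction g_0 of f to {x : ⟨α,x⟩ = 0}, viewed as a Boolean function on F_2^{n−1} after a change of basis mapping α to e_1, satisfies ĝ_0(β) = 2·f̂(L β) for an appropriate injective linear map L, so every Fourier coefficient of g_0 is twice a Fourier coefficient of f. -/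
open Finset

/-- Dimension-reduction step. -/
theorem stmt_17 {n k : ℕ} (hn : 1 ≤ n) (f : (Fin n → ZMod 2) → ℝ)
    (hf : ∀ x, f x = 0 ∨ f x = 1)
    (h0 : fc f 0 = 1 / 2 ^ (k - 1))
    (α : Fin n → ZMod 2) (hα : α ≠ 0) (hα' : fc f α = 1 / 2 ^ (k - 1)) :
    (∀ x : Fin n → ZMod 2, (∑ i, α i * x i : ZMod 2) = 1 → f x = 0) ∧
    ∃ (P L : (Fin (n - 1) → ZMod 2) →ₗ[ZMod 2] (Fin n → ZMod 2)),
      Function.Injective P ∧ Function.Injective L ∧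
      Set.range P = {x : Fin n → ZMod 2 | (∑ i, α i * x i : ZMod 2) = 0} ∧
      ∀ β : Fin (n - 1) → ZMod 2, fc (fun y => f (P y)) β = 2 * fc f (L β) := by
  have hz2 : ∀ a : ZMod 2, a = 0 ∨ a = 1 := by decide
  have hz2' : ∀ a b : ZMod 2, a + b = 0 → b = a := by decide
  -- Part 1: f vanishes on the affine hyperplane ⟨α,x⟩ = 1
  have heq : fc f 0 = fc f α := by rw [h0, hα']
  have h2n : (2 : ℝ) ^ n ≠ 0 := by positivity
  have hAB : ∑ x : Fin n → ZMod 2, f x =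
      ∑ x : Fin n → ZMod 2, f x * (-1 : ℝ) ^ (∑ i, α i * x i : ZMod 2).val := by
    unfold fc at heq
    rw [div_eq_div_iff h2n h2n] at heq
    have h := mul_right_cancel₀ h2n heq
    rw [← h]
    apply Finset.sum_congr rfl
    intro x _
    simp
  have hsum : ∑ x : Fin n → ZMod 2,
      f x * (1 - (-1 : ℝ) ^ (∑ i, α i * x i : ZMod 2).val) = 0 := by
    simp only [mul_sub, Finset.sum_sub_distrib, mul_one]
    rw [sub_eq_zero, ← hAB]
  have hnonneg : ∀ x ∈ (Finset.univ : Finset (Fin n → ZMod 2)),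
      0 ≤ f x * (1 - (-1 : ℝ) ^ (∑ i, α i * x i : ZMod 2).val) := by
    intro x _
    have hf0 : 0 ≤ f x := by rcases hf x with h | h <;> rw [h] <;> norm_num
    have hle : (-1 : ℝ) ^ (∑ i, α i * x i : ZMod 2).val ≤ 1 := by
      rcases neg_one_pow_eq_or ℝ (∑ i, α i * x i : ZMod 2).val with h | h <;>
        rw [h] <;> norm_num
    exact mul_nonneg hf0 (by linarith)
  have hterm := (Finset.sum_eq_zero_iff_of_nonneg hnonneg).1 hsum
  have key : ∀ x : Fin n → ZMod 2, (∑ i, α i * x i : ZMod 2) = 1 → f x = 0 := by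
    intro x hx
    have h := hterm x (Finset.mem_univ x)
    rw [hx, show ((1 : ZMod 2)).val = 1 from rfl] at h
    norm_num at h
    exact h
  refine ⟨key, ?_⟩
  -- Part 2
  obtain ⟨m, rfl⟩ : ∃ m, n = m + 1 := ⟨n - 1, by omega⟩
  obtain ⟨j, hj⟩ : ∃ j, α j = 1 := by
    by_contra h
    push_neg at h
    exact hα (funext fun i => (hz2 (α i)).resolve_right (h i))
  have ext2 : ∀ u v : Fin (m + 1) → ZMod 2, u j = v j →
      (∀ t, u (j.succAbove t) = v (j.succAbove t)) → u = v := by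
    intro u v h1 h2
    funext i
    exact (Fin.forall_iff_succAbove (P := fun i => u i = v i) j).2 ⟨h1, h2⟩ i
  set s : (Fin m → ZMod 2) → ZMod 2 := fun y => ∑ t, α (j.succAbove t) * y t with hs
  have hsadd : ∀ y z, s (y + z) = s y + s z := by
    intro y z
    simp [hs, mul_add, Finset.sum_add_distrib]
  have hssmul : ∀ (c : ZMod 2) y, s (c • y) = c * s y := by
    intro c y
    simp [hs, Finset.mul_sum, mul_left_comm]
  set P : (Fin m → ZMod 2) →ₗ[ZMod 2] (Fin (m + 1) → ZMod 2) :=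
    { toFun := fun y => j.insertNth (s y) y
      map_add' := by
        intro y z
        apply ext2 <;> simp [hsadd]
      map_smul' := by
        intro c y
        apply ext2 <;> simp [hssmul] } with hP
  set L : (Fin m → ZMod 2) →ₗ[ZMod 2] (Fin (m + 1) → ZMod 2) :=
    { toFun := fun β => j.insertNth 0 β
      map_add' := by
        intro y z
        apply ext2 <;> simp
      map_smul' := by
        intro c y
        apply ext2 <;> simp } with hL
  have hPapp : ∀ y, P y = j.insertNth (s y) y := fun y => rfl
  have hLapp : ∀ β, L β = j.insertNth 0 β := fun β => rfl
  have hPj : ∀ y, P y j = s y := by intro y; rw [hPapp]; simp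
  have hPsA : ∀ y t, P y (j.succAbove t) = y t := by intro y t; rw [hPapp]; simp
  have hLj : ∀ β, L β j = 0 := by intro β; rw [hLapp]; simp
  have hLsA : ∀ β t, L β (j.succAbove t) = β t := by intro β t; rw [hLapp]; simp
  have hPker : ∀ y, (∑ i, α i * P y i : ZMod 2) = 0 := by
    intro y
    rw [Fin.sum_univ_succAbove _ j, hj, one_mul, hPj]
    have h : ∑ t, α (j.succAbove t) * P y (j.succAbove t) = s y :=
      Finset.sum_congr rfl fun t _ => by rw [hPsA]
    rw [h, CharTwo.add_self_eq_zero]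
  have hPinj : Function.Injective P := by
    intro y z h
    funext t
    have h' := congrFun h (j.succAbove t)
    rwa [hPsA, hPsA] at h'
  have hLinj : Function.Injective L := by
    intro y z h
    funext t
    have h' := congrFun h (j.succAbove t)
    rwa [hLsA, hLsA] at h'
  have hPsurj : ∀ x : Fin (m + 1) → ZMod 2, (∑ i, α i * x i : ZMod 2) = 0 →
      P (fun t => x (j.succAbove t)) = x := by
    intro x hx
    rw [Fin.sum_univ_succAbove _ j, hj, one_mul] at hx
    apply ext2
    · rw [hPj]
      exact hz2' _ _ hx
    · intro t
      rw [hPsA]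
  have hrange : Set.range P = {x : Fin (m + 1) → ZMod 2 | (∑ i, α i * x i : ZMod 2) = 0} := by
    ext x
    constructor
    · rintro ⟨y, rfl⟩
      exact hPker y
    · intro hx
      exact ⟨fun t => x (j.succAbove t), hPsurj x hx⟩
  refine ⟨P, L, hPinj, hLinj, hrange, ?_⟩
  intro β
  have hip : ∀ y, (∑ i, L β i * P y i : ZMod 2) = ∑ t, β t * y t := by
    intro y
    rw [Fin.sum_univ_succAbove _ j, hLj, zero_mul, zero_add]
    exact Finset.sum_congr rfl fun t _ => by rw [hLsA, hPsA]
  have hsums : ∑ x : Fin (m + 1) → ZMod 2, f x * (-1 : ℝ) ^ (∑ i, L β i * x i : ZMod 2).val =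
      ∑ y : Fin m → ZMod 2, f (P y) * (-1 : ℝ) ^ (∑ t, β t * y t : ZMod 2).val := by
    rw [← Finset.sum_filter_add_sum_filter_not Finset.univ
      (fun x => (∑ i, α i * x i : ZMod 2) = 0)]
    have hz : ∑ x ∈ Finset.filter (fun x => ¬((∑ i, α i * x i : ZMod 2) = 0)) Finset.univ,
        f x * (-1 : ℝ) ^ (∑ i, L β i * x i : ZMod 2).val = 0 := by
      apply Finset.sum_eq_zero
      intro x hx
      rw [key x ((hz2 _).resolve_left (Finset.mem_filter.1 hx).2), zero_mul]
    rw [hz, add_zero]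
    refine Finset.sum_nbij' (fun x => fun t => x (j.succAbove t)) (fun y => P y)
      (fun x _ => Finset.mem_univ _) (fun y _ => Finset.mem_filter.2 ⟨Finset.mem_univ _, hPker y⟩)
      ?_ ?_ ?_
    · intro x hx
      exact hPsurj x (Finset.mem_filter.1 hx).2
    · intro y _
      funext t
      exact hPsA y t
    · intro x hx
      rw [hPsurj x (Finset.mem_filter.1 hx).2]
      congr 2
      rw [← hip (fun t => x (j.succAbove t)), hPsurj x (Finset.mem_filter.1 hx).2]
  show (∑ y : Fin m → ZMod 2, f (P y) * (-1 : ℝ) ^ (∑ t, β t * y t : ZMod 2).val) / 2 ^ m =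
      2 * ((∑ x : Fin (m + 1) → ZMod 2,
        f x * (-1 : ℝ) ^ (∑ i, L β i * x i : ZMod 2).val) / 2 ^ (m + 1))
  rw [hsums]
  rw [pow_succ]
  field_simp
end
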